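/- arXiv:1801.07754 — 2 statements merged into one kernel-verified Lean document; each statement's English description precedes it below -/
import Mathlib

section
/- Let p be a prime and suppose r = b + s·p^t·(p−1) with t ≥ 1. Then for any integers i, m with 0 ≤ i, m and m ≤ p−1, the difference of binomial coefficients C(b−i, m) − C(r−i, m) is divisible by p^t in Z_p (indeed (C(b−i,m) − C(r−i,m)) ∈ (r−b)/m! · Z, which lies in (r−b)·Z_p since m! is prime to p for m ≤ p−1). -/
/-- If `r = b + s p^t (p-1)` with `t ≥ 1` and `m ≤ p-1`
(with `m ≤ b-i`, `m ≤ r-i`, `i ≤ b`), then `p^t` divides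
`C(b-i,m) - C(r-i,m)`. -/
theorem stmt9 (p b s t r i m : ℕ) (hp : p.Prime) (ht : 1 ≤ t)
    (hr : r = b + s * p ^ t * (p - 1)) (hm : m ≤ p - 1)
    (hib : i ≤ b) (hbi : m ≤ b - i) (hri : m ≤ r - i) :
    (p : ℤ) ^ t ∣ ((b - i).choose m : ℤ) - ((r - i).choose m : ℤ) := by
  set A := b - i with hA
  set B := r - i with hB
  -- p^t divides (A:ℤ) - (B:ℤ)
  have hAB : (p : ℤ) ^ t ∣ ((A : ℤ) - (B : ℤ)) := by
    have hBval : (B : ℤ) = (A : ℤ) + (s : ℤ) * (p : ℤ) ^ t * ((p : ℤ) - 1) := by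
      have hble : b ≤ r := by omega
      have h1 : (B : ℤ) = (r : ℤ) - i := by
        rw [hB]; push_cast [Nat.cast_sub (by omega : i ≤ r)]; ring
      have h2 : (A : ℤ) = (b : ℤ) - i := by
        rw [hA]; push_cast [Nat.cast_sub hib]; ring
      have hp1 : (1 : ℕ) ≤ p := hp.one_lt.le
      have : (r : ℤ) = (b : ℤ) + (s : ℤ) * (p : ℤ) ^ t * ((p : ℤ) - 1) := by
        rw [hr]; push_cast [Nat.cast_sub hp1]; ring
      rw [h1, h2, this]; ring
    rw [hBval]
    have : (A : ℤ) - ((A : ℤ) + (s : ℤ) * (p : ℤ) ^ t * ((p : ℤ) - 1))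
        = -((s : ℤ) * ((p : ℤ) - 1)) * (p : ℤ) ^ t := by ring
    rw [this]
    exact Dvd.intro_left _ rfl
  -- p^t divides descFactorial difference
  have hdesc : (p : ℤ) ^ t ∣ (A.descFactorial m : ℤ) - (B.descFactorial m : ℤ) := by
    have := Polynomial.sub_dvd_eval_sub (A : ℤ) (B : ℤ) (descPochhammer ℤ m)
    rw [descPochhammer_eval_eq_descFactorial, descPochhammer_eval_eq_descFactorial] at this
    exact hAB.trans this
  -- rewrite descFactorial as m! * choose
  have hfac : (p : ℤ) ^ t ∣ (Nat.factorial m : ℤ) * (((A.choose m : ℤ)) - (B.choose m : ℤ)) := by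
    have h1 : (A.descFactorial m : ℤ) = (Nat.factorial m : ℤ) * (A.choose m : ℤ) := by
      rw [Nat.descFactorial_eq_factorial_mul_choose]; push_cast; ring
    have h2 : (B.descFactorial m : ℤ) = (Nat.factorial m : ℤ) * (B.choose m : ℤ) := by
      rw [Nat.descFactorial_eq_factorial_mul_choose]; push_cast; ring
    rw [mul_sub, ← h1, ← h2]; exact hdesc
  -- p^t is coprime to m!
  have hcop : IsCoprime ((p : ℤ) ^ t) (Nat.factorial m : ℤ) := by
    have hpm : ¬ (p ∣ Nat.factorial m) := by
      rw [hp.dvd_factorial]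
      have := hp.two_le
      omega
    have : IsCoprime (p : ℤ) (Nat.factorial m : ℤ) := by
      rw [Int.isCoprime_iff_gcd_eq_one]
      have := (Nat.Prime.coprime_iff_not_dvd hp).mpr hpm
      simpa [Int.gcd_natCast_natCast] using this
    exact this.pow_left
  exact hcop.dvd_of_dvd_mul_left hfac
end

section
/- Let p be an odd prime and h(z) = −(z^{p−1} − 1)^m (z^{r−mp} − z^{b−m}) ∈ F_p[z], with r ≡ b (mod p−1) and exponents nonnegative. Then for every λ ∈ F_p^× and every 0 ≤ j ≤ m, the j-th formal derivative h^{(j)}(λ) = 0. -/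
/-- For `h(z) = -(z^{p-1} - 1)^m (z^{r-mp} - z^{b-m}) ∈ F_p[z]`
with `r ≡ b (mod p-1)`, `r ≥ mp`, `b ≥ m`, all formal derivatives of order
`≤ m` vanish at every `λ ∈ F_p^×`. -/
theorem stmt15 (p r b m : ℕ) (hp : p.Prime) (hodd : Odd p)
    (hdvd : (p - 1) ∣ r - b) (hbr : b ≤ r) (hr : m * p ≤ r) (hb : m ≤ b) :
    ∀ lam : ZMod p, lam ≠ 0 → ∀ j ≤ m,
      (Polynomial.derivative^[j]
        (-(((Polynomial.X : Polynomial (ZMod p)) ^ (p - 1) - 1) ^ m *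
            (Polynomial.X ^ (r - m * p) - Polynomial.X ^ (b - m))))).eval lam = 0 := by
  intro lam hlam j hj
  haveI : Fact p.Prime := ⟨hp⟩
  have hpow : lam ^ (p - 1) = 1 := ZMod.pow_card_sub_one_eq_one hlam
  have key : ∀ a c : ℕ, a ≡ c [MOD p - 1] → lam ^ a = lam ^ c := by
    intro a c hac
    have h1 : ∀ a : ℕ, lam ^ a = lam ^ (a % (p - 1)) := by
      intro a
      conv_lhs => rw [← Nat.div_add_mod a (p - 1)]
      rw [pow_add, pow_mul, hpow, one_pow, one_mul]
    rw [h1 a, h1 c, hac]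
  have hmod : (r - m * p) ≡ (b - m) [MOD p - 1] := by
    have h1 : b ≡ r [MOD p - 1] := (Nat.modEq_iff_dvd' hbr).mpr hdvd
    apply Nat.ModEq.add_right_cancel' (m * p)
    have e1 : (r - m * p) + m * p = r := Nat.sub_add_cancel hr
    have e2 : (b - m) + m * p = b + m * (p - 1) := by
      have h4 : m * (p - 1) = m * p - m := by rw [Nat.mul_sub, mul_one]
      have h5 : m ≤ m * p := Nat.le_mul_of_pos_right m hp.pos
      omega
    rw [e1, e2]
    have h3 : b + m * (p - 1) ≡ b [MOD p - 1] := by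
      unfold Nat.ModEq
      simp [Nat.add_mul_mod_self_right]
    exact (h3.trans h1).symm
  set q : Polynomial (ZMod p) := Polynomial.X - Polynomial.C lam with hq
  have d1 : q ∣ ((Polynomial.X : Polynomial (ZMod p)) ^ (p - 1) - 1) := by
    rw [hq, Polynomial.dvd_iff_isRoot]
    simp [Polynomial.IsRoot, hpow]
  have d2 : q ∣ ((Polynomial.X : Polynomial (ZMod p)) ^ (r - m * p) -
      Polynomial.X ^ (b - m)) := by
    rw [hq, Polynomial.dvd_iff_isRoot]
    simp [Polynomial.IsRoot, key _ _ hmod]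
  have dall : q ^ (m + 1) ∣
      -(((Polynomial.X : Polynomial (ZMod p)) ^ (p - 1) - 1) ^ m *
        (Polynomial.X ^ (r - m * p) - Polynomial.X ^ (b - m))) := by
    rw [dvd_neg, pow_succ]
    exact mul_dvd_mul (pow_dvd_pow_of_dvd d1 m) d2
  have hd := Polynomial.pow_sub_dvd_iterate_derivative_of_pow_dvd j dall
  have hq1 : q ∣ Polynomial.derivative^[j]
      (-(((Polynomial.X : Polynomial (ZMod p)) ^ (p - 1) - 1) ^ m *
        (Polynomial.X ^ (r - m * p) - Polynomial.X ^ (b - m)))) :=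
    (dvd_pow_self q (by omega : m + 1 - j ≠ 0)).trans hd
  rw [hq, Polynomial.dvd_iff_isRoot] at hq1
  exact hq1
end
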